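/- The q-Pfaff–Saalschütz summation: for a nonnegative integer n and complex a, b, c, q with c, abq^{1-n}/c not equal to q^{-m} for 0 ≤ m < n, ∑_{k=0}^{n} ((a;q)_k (b;q)_k (q^{-n};q)_k / ((q;q)_k (c;q)_k (abq^{1-n}/c; q)_k)) q^k = (c/a;q)_n (c/b;q)_n / ((c;q)_n (c/(ab);q)_n). -/

import Mathlib

/-- Finite q-Pochhammer symbol: (a;q)_n = ∏_{k=0}^{n-1} (1 - a q^k). -/
noncomputable def qp (a q : ℂ) (n : ℕ) : ℂ := ∏ k ∈ Finset.range n, (1 - a * q ^ k)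

/-- Infinite q-Pochhammer symbol: (a;q)_∞ = ∏_{k=0}^∞ (1 - a q^k). -/
noncomputable def qpInf (a q : ℂ) : ℂ := ∏' k : ℕ, (1 - a * q ^ k)

lemma qp_succ (A q : ℂ) (k : ℕ) : qp A q (k + 1) = qp A q k * (1 - A * q ^ k) :=
  Finset.prod_range_succ _ _

lemma qp_shift {q : ℂ} (hq : q ≠ 0) (A : ℂ) (k : ℕ) :
    qp (A / q) q (k + 1) = (1 - A / q) * qp A q k := by
  unfold qp
  rw [Finset.prod_range_succ']
  have h : ∀ i : ℕ, (1 : ℂ) - A / q * q ^ (i + 1) = 1 - A * q ^ i := by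
    intro i
    rw [pow_succ]
    field_simp
  simp only [h, pow_zero, mul_one]
  exact mul_comm _ _

lemma qp_ne_zero {q C : ℂ} {k : ℕ} (h : ∀ m, m < k → C * q ^ m ≠ 1) :
    qp C q k ≠ 0 := by
  rw [qp, Finset.prod_ne_zero_iff]
  intro m hm h0
  exact h m (Finset.mem_range.mp hm) (sub_eq_zero.mp h0).symm

lemma frac_identity {A B C D E F G H : ℂ} (hB : B ≠ 0) (hD : D ≠ 0) (hF : F ≠ 0) (hH : H ≠ 0)
    (h : (A * D - C * B) * (F * H) = (E * H - G * F) * (B * D)) :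
    A / B - C / D = E / F - G / H := by
  rw [div_sub_div _ _ hB hD, div_sub_div _ _ hF hH,
    div_eq_div_iff (mul_ne_zero hB hD) (mul_ne_zero hF hH)]
  linear_combination h

/-- Telescoping certificate function for the WZ-style proof. -/
noncomputable def Gfun (q a b c C0 u v : ℂ) : ℕ → ℂ
  | 0 => 0
  | (j + 1) => qp a q (j + 1) * qp b q (j + 1) * qp u q j /
      (qp q q j * qp c q j * qp v q j * C0)

set_option maxHeartbeats 1600000 in
theorem qps_key (q a b c : ℂ) (n : ℕ) (hq0 : q ≠ 0)
    (ha : a ≠ 0) (hb : b ≠ 0) (hc0 : c ≠ 0)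
    (hroot : ∀ k : ℕ, 1 ≤ k → k ≤ n → q ^ k ≠ 1)
    (hc : ∀ m : ℕ, m < n → c * q ^ m ≠ 1)
    (hd : ∀ m : ℕ, m < n → a * b * q ^ (m + 1) ≠ c * q ^ n) :
    ∑ k ∈ Finset.range (n + 1),
        qp a q k * qp b q k * qp (q ^ n)⁻¹ q k /
          (qp q q k * qp c q k * qp (a * b * q / (c * q ^ n)) q k) * q ^ k
      = qp (c / a) q n * qp (c / b) q n / (qp c q n * qp (c / (a * b)) q n) := by
  revert hroot hc hd
  induction n with
  | zero => intro _ _ _; simp [qp]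
  | succ n ih =>
    intro hroot hc hd
    have hMq : (q : ℂ) ^ n ≠ 0 := pow_ne_zero _ hq0
    have hqq : ∀ j : ℕ, j ≤ n → (1 : ℂ) - q * q ^ j ≠ 0 := by
      intro j hj h
      exact hroot (j + 1) (by omega) (by omega) (by linear_combination -h)
    have hcc : ∀ j : ℕ, j ≤ n → (1 : ℂ) - c * q ^ j ≠ 0 := by
      intro j hj h
      exact hc j (by omega) (sub_eq_zero.mp h).symm
    have hvv : ∀ j : ℕ, j < n → (1 : ℂ) - a * b * q / (c * q ^ n) * q ^ j ≠ 0 := by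
      intro j hj h
      apply hd (j + 1) (by omega)
      have h2 : a * b * q * q ^ j = c * q ^ n := by
        field_simp at h
        linear_combination -h
      linear_combination q * h2
    have hvq : (1 : ℂ) - a * b * q / (c * q ^ n) / q ≠ 0 := by
      intro h
      apply hd 0 (by omega)
      field_simp at h
      linear_combination -q * h
    have hstep : (1 : ℂ) - c / (a * b) * q ^ n ≠ 0 := by
      intro h
      apply hd 0 (by omega)
      field_simp at h
      linear_combination q * h
    have hab1 : a * b - c * q ^ n ≠ 0 := by
      intro h
      exact hd 0 (by omega) (by linear_combination q * h)
    have hab2 : c * q ^ n - a * b ≠ 0 := by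
      intro h
      exact hd 0 (by omega) (by linear_combination -q * h)
    have habj1 : ∀ j : ℕ, j < n → c * q ^ n - a * b * q * q ^ j ≠ 0 := by
      intro j hj h
      exact hd (j + 1) (by omega) (by linear_combination -q * h)
    have habj2 : ∀ j : ℕ, j < n → a * b * q * q ^ j - c * q ^ n ≠ 0 := by
      intro j hj h
      exact hd (j + 1) (by omega) (by linear_combination q * h)
    have hrV : ∀ X : ℂ, 1 - a * b * q / (c * q ^ n) * X = (c * q ^ n - a * b * q * X) / (c * q ^ n) := by
      intro X
      field_simp
    have hrVq : 1 - a * b * q / (c * q ^ n) / q = (c * q ^ n - a * b) / (c * q ^ n) := by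
      field_simp
    have hrU : ∀ X : ℂ, 1 - (q ^ n)⁻¹ * X = (q ^ n - X) / q ^ n := by
      intro X
      field_simp
    have hrUq : 1 - (q ^ n)⁻¹ / q = (q * q ^ n - 1) / (q * q ^ n) := by
      field_simp
    have hrCa : 1 - c / a * q ^ n = (a - c * q ^ n) / a := by field_simp
    have hrCb : 1 - c / b * q ^ n = (b - c * q ^ n) / b := by field_simp
    have hrCab : 1 - c / (a * b) * q ^ n = (a * b - c * q ^ n) / (a * b) := by field_simp
    have hQ : ∀ j : ℕ, j ≤ n + 1 → qp q q j ≠ 0 := by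
      intro j hj
      apply qp_ne_zero
      intro m hm h
      exact hroot (m + 1) (by omega) (by omega) (by linear_combination h)
    have hC : ∀ j : ℕ, j ≤ n + 1 → qp c q j ≠ 0 := by
      intro j hj
      apply qp_ne_zero
      intro m hm h
      exact hc m (by omega) h
    have hV : ∀ j : ℕ, j ≤ n → qp (a * b * q / (c * q ^ n)) q j ≠ 0 := by
      intro j hj
      apply qp_ne_zero
      intro m hm h
      apply hd (m + 1) (by omega)
      have h2 : a * b * q * q ^ m = c * q ^ n := by
        field_simp at h
        linear_combination h
      linear_combination q * h2
    have hCab : qp (c / (a * b)) q n ≠ 0 := by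
      apply qp_ne_zero
      intro m hm h
      apply hd (n - m) (by omega)
      have h2 : c * q ^ m = a * b := by
        field_simp at h
        linear_combination h
      have hnm : m + (n - m + 1) = n + 1 := by omega
      calc a * b * q ^ (n - m + 1) = c * q ^ m * q ^ (n - m + 1) := by rw [h2]
        _ = c * q ^ (n + 1) := by rw [mul_assoc, ← pow_add, hnm]
    have hU0 : qp (q ^ n)⁻¹ q (n + 1) = 0 := by
      unfold qp
      apply Finset.prod_eq_zero (Finset.self_mem_range_succ n)
      rw [inv_mul_cancel₀ hMq]
      exact sub_self 1
    have hu' : ((q : ℂ) ^ (n + 1))⁻¹ = (q ^ n)⁻¹ / q := by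
      rw [pow_succ, mul_inv]
      ring
    have hv' : a * b * q / (c * q ^ (n + 1)) = a * b * q / (c * q ^ n) / q := by
      rw [pow_succ]
      ring
    simp only [hu', hv']
    set G : ℕ → ℂ := Gfun q a b c
      ((1 - c * q ^ n) * (1 - a * b * q / (c * q ^ n) / q))
      ((q ^ n)⁻¹) (a * b * q / (c * q ^ n)) with hGdef
    have hpoint : ∀ k ∈ Finset.range (n + 1 + 1),
        qp a q k * qp b q k * qp ((q ^ n)⁻¹ / q) q k /
            (qp q q k * qp c q k * qp (a * b * q / (c * q ^ n) / q) q k) * q ^ k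
          - (1 - c / a * q ^ n) * (1 - c / b * q ^ n) /
              ((1 - c * q ^ n) * (1 - c / (a * b) * q ^ n)) *
            (qp a q k * qp b q k * qp (q ^ n)⁻¹ q k /
              (qp q q k * qp c q k * qp (a * b * q / (c * q ^ n)) q k) * q ^ k)
          = G (k + 1) - G k := by
      intro k hk
      rw [Finset.mem_range] at hk
      cases k with
      | zero =>
        simp only [hGdef, Gfun, qp_succ]
        simp only [qp, Finset.prod_range_zero, pow_zero, one_mul, mul_one, one_div, div_one]
        simp only [hrV, hrVq, hrU, hrUq, hrCa, hrCb, hrCab]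
        field_simp [hcc n le_rfl, hab1, hab2]
        ring
      | succ j =>
        have hjn : j ≤ n := by omega
        rcases eq_or_lt_of_le hjn with rfl | hjlt
        · -- k = j + 1 with j = n  (top boundary case)
          simp only [hGdef, Gfun, hU0, mul_zero, zero_mul, zero_div, zero_sub, sub_zero]
          rw [qp_shift hq0 ((q ^ j) ⁻¹), qp_shift hq0 (a * b * q / (c * q ^ j))]
          simp only [qp_succ]
          have hPQ : qp q q j ≠ 0 := hQ j (by omega)
          have hPC : qp c q j ≠ 0 := hC j (by omega)
          have hPV : qp (a * b * q / (c * q ^ j)) q j ≠ 0 := hV j le_rfl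
          set PA := qp a q j with hPAd
          set PB := qp b q j with hPBd
          set PU := qp ((q ^ j)⁻¹) q j with hPUd
          set PQ := qp q q j with hPQd
          set PC := qp c q j with hPCd
          set PV := qp (a * b * q / (c * q ^ j)) q j with hPVd
          have h1 : (1 : ℂ) - q * q ^ j ≠ 0 := hqq j le_rfl
          have h2 : (1 : ℂ) - c * q ^ j ≠ 0 := hcc j le_rfl
          have hfr : (c * q ^ j - a * b) / (c * q ^ j) ≠ 0 :=
            div_ne_zero hab2 (mul_ne_zero hc0 hMq)
          rw [hrVq, hrUq, div_mul_eq_mul_div, neg_div',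
            div_eq_div_iff
              (mul_ne_zero (mul_ne_zero (mul_ne_zero hPQ h1) (mul_ne_zero hPC h2))
                (mul_ne_zero hfr hPV))
              (mul_ne_zero (mul_ne_zero (mul_ne_zero hPQ hPC) hPV) (mul_ne_zero h2 hfr))]
          field_simp
          ring
        · -- generic case
          simp only [hGdef, Gfun]
          rw [qp_shift hq0 ((q ^ n)⁻¹), qp_shift hq0 (a * b * q / (c * q ^ n))]
          simp only [qp_succ]
          have hPQ : qp q q j ≠ 0 := hQ j (by omega)
          have hPC : qp c q j ≠ 0 := hC j (by omega)
          have hPV : qp (a * b * q / (c * q ^ n)) q j ≠ 0 := hV j (by omega)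
          set PA := qp a q j with hPAd
          set PB := qp b q j with hPBd
          set PU := qp ((q ^ n)⁻¹) q j with hPUd
          set PQ := qp q q j with hPQd
          set PC := qp c q j with hPCd
          set PV := qp (a * b * q / (c * q ^ n)) q j with hPVd
          have h1 : (1 : ℂ) - q * q ^ j ≠ 0 := hqq j (by omega)
          have h2 : (1 : ℂ) - c * q ^ j ≠ 0 := hcc j (by omega)
          have h3 : (1 : ℂ) - c * q ^ n ≠ 0 := hcc n le_rfl
          have hvvj : 1 - a * b * q / (c * q ^ n) * q ^ j ≠ 0 := hvv j hjlt
          have hj1 : c * q ^ n - a * b * q * q ^ j ≠ 0 := habj1 j hjlt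
          have hcM : c * q ^ n ≠ 0 := mul_ne_zero hc0 hMq
          have hD : q * q ^ n * (c * q ^ n) * PQ * (1 - q * q ^ j) * PC * (1 - c * q ^ j) * PV *
              (c * q ^ n - a * b * q * q ^ j) * (1 - c * q ^ n) * (c * q ^ n - a * b) ≠ 0 := by
            repeat' first | assumption | apply mul_ne_zero
          have e1 : PA * (1 - a * q ^ j) * (PB * (1 - b * q ^ j)) * ((1 - (q ^ n)⁻¹ / q) * PU) /
                    (PQ * (1 - q * q ^ j) * (PC * (1 - c * q ^ j)) *
                      ((1 - a * b * q / (c * q ^ n) / q) * PV)) * q ^ (j + 1)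
              = PA * (1 - a * q ^ j) * PB * (1 - b * q ^ j) * (q * q ^ n - 1) * PU * q ^ (j + 1) *
                  (c * q ^ n) * (c * q ^ n) * (c * q ^ n - a * b * q * q ^ j) * (1 - c * q ^ n) /
                (q * q ^ n * (c * q ^ n) * PQ * (1 - q * q ^ j) * PC * (1 - c * q ^ j) * PV *
                  (c * q ^ n - a * b * q * q ^ j) * (1 - c * q ^ n) * (c * q ^ n - a * b)) := by
            rw [div_mul_eq_mul_div,
              div_eq_div_iff (by repeat' first | assumption | apply mul_ne_zero : PQ * (1 - q * q ^ j) *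
                (PC * (1 - c * q ^ j)) * ((1 - a * b * q / (c * q ^ n) / q) * PV) ≠ 0) hD]
            field_simp
          have e2 : (1 - c / a * q ^ n) * (1 - c / b * q ^ n) /
                    ((1 - c * q ^ n) * (1 - c / (a * b) * q ^ n)) *
                  (PA * (1 - a * q ^ j) * (PB * (1 - b * q ^ j)) *
                        (PU * (1 - (q ^ n)⁻¹ * q ^ j)) /
                      (PQ * (1 - q * q ^ j) * (PC * (1 - c * q ^ j)) *
                        (PV * (1 - a * b * q / (c * q ^ n) * q ^ j))) *
                    q ^ (j + 1))
              = -((a - c * q ^ n) * (b - c * q ^ n) * PA * (1 - a * q ^ j) * PB * (1 - b * q ^ j) * PU *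
                  (q ^ n - q ^ j) * q ^ (j + 1) * q * (c * q ^ n) * (c * q ^ n)) /
                (q * q ^ n * (c * q ^ n) * PQ * (1 - q * q ^ j) * PC * (1 - c * q ^ j) * PV *
                  (c * q ^ n - a * b * q * q ^ j) * (1 - c * q ^ n) * (c * q ^ n - a * b)) := by
            have hsplit : ∀ P R X Y w : ℂ, P / R * (X / Y * w) = P * X * w / (R * Y) := by
              intros P R X Y w
              ring
            rw [hsplit, div_eq_div_iff (by repeat' first | assumption | apply mul_ne_zero) hD]
            field_simp
            ring
          have e3 : PA * (1 - a * q ^ j) * (1 - a * q ^ (j + 1)) *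
                      (PB * (1 - b * q ^ j) * (1 - b * q ^ (j + 1))) *
                    (PU * (1 - (q ^ n)⁻¹ * q ^ j)) /
                  (PQ * (1 - q * q ^ j) * (PC * (1 - c * q ^ j)) *
                      (PV * (1 - a * b * q / (c * q ^ n) * q ^ j)) *
                    ((1 - c * q ^ n) * (1 - a * b * q / (c * q ^ n) / q)))
              = PA * (1 - a * q ^ j) * (1 - a * q ^ (j + 1)) * PB * (1 - b * q ^ j) *
                  (1 - b * q ^ (j + 1)) * PU * (q ^ n - q ^ j) * (c * q ^ n) * (c * q ^ n) *
                  (c * q ^ n) * q /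
                (q * q ^ n * (c * q ^ n) * PQ * (1 - q * q ^ j) * PC * (1 - c * q ^ j) * PV *
                  (c * q ^ n - a * b * q * q ^ j) * (1 - c * q ^ n) * (c * q ^ n - a * b)) := by
            rw [hrU, hrV, hrVq]
            generalize c * q ^ n - a * b * q * q ^ j = V at *
            generalize c * q ^ n - a * b = W at *
            generalize q ^ n - q ^ j = U at *
            generalize 1 - c * q ^ n = C2 at *
            generalize c * q ^ n = M at *
            generalize 1 - a * q ^ j = A1 at *
            generalize 1 - a * q ^ (j + 1) = A2 at *
            generalize 1 - b * q ^ j = B1 at *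
            generalize 1 - b * q ^ (j + 1) = B2 at *
            generalize 1 - q * q ^ j = Q1 at *
            generalize 1 - c * q ^ j = C1 at *
            field_simp
          have e4 : PA * (1 - a * q ^ j) * (PB * (1 - b * q ^ j)) * PU /
                  (PQ * PC * PV * ((1 - c * q ^ n) * (1 - a * b * q / (c * q ^ n) / q)))
              = PA * (1 - a * q ^ j) * PB * (1 - b * q ^ j) * PU * (c * q ^ n) * (c * q ^ n) * q *
                  q ^ n * (1 - q * q ^ j) * (1 - c * q ^ j) * (c * q ^ n - a * b * q * q ^ j) /
                (q * q ^ n * (c * q ^ n) * PQ * (1 - q * q ^ j) * PC * (1 - c * q ^ j) * PV *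
                  (c * q ^ n - a * b * q * q ^ j) * (1 - c * q ^ n) * (c * q ^ n - a * b)) := by
            rw [div_eq_div_iff (by repeat' first | assumption | apply mul_ne_zero) hD]
            field_simp
          rw [e1, e2, e3, e4, div_sub_div_same, div_sub_div_same, sub_neg_eq_add]
          congr 1
          ring

    have hsum := Finset.sum_congr rfl hpoint
    rw [Finset.sum_range_sub G (n + 1 + 1)] at hsum
    have hG0 : G 0 = 0 := by simp [hGdef, Gfun]
    have hGtop : G (n + 1 + 1) = 0 := by
      simp [hGdef, Gfun, hU0]
    rw [hG0, hGtop, sub_zero, Finset.sum_sub_distrib, ← Finset.mul_sum] at hsum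
    have hroot' : ∀ k : ℕ, 1 ≤ k → k ≤ n → q ^ k ≠ 1 := fun k h1 h2 => hroot k h1 (by omega)
    have hc' : ∀ m : ℕ, m < n → c * q ^ m ≠ 1 := fun m hm => hc m (by omega)
    have hd' : ∀ m : ℕ, m < n → a * b * q ^ (m + 1) ≠ c * q ^ n := by
      intro m hm h
      exact hd (m + 1) (by omega) (by linear_combination q * h)
    have hlast : qp a q (n + 1) * qp b q (n + 1) * qp (q ^ n)⁻¹ q (n + 1) /
        (qp q q (n + 1) * qp c q (n + 1) * qp (a * b * q / (c * q ^ n)) q (n + 1)) *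
          q ^ (n + 1) = 0 := by
      rw [hU0]
      simp
    have hIH2 : ∑ k ∈ Finset.range (n + 1 + 1),
        qp a q k * qp b q k * qp (q ^ n)⁻¹ q k /
          (qp q q k * qp c q k * qp (a * b * q / (c * q ^ n)) q k) * q ^ k
        = qp (c / a) q n * qp (c / b) q n / (qp c q n * qp (c / (a * b)) q n) := by
      rw [Finset.sum_range_succ, ih hroot' hc' hd', hlast, add_zero]
    rw [hIH2, sub_eq_zero] at hsum
    rw [hsum]
    simp only [qp_succ]
    simp only [hrV, hrVq, hrU, hrUq, hrCa, hrCb, hrCab]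
    field_simp [hC n (by omega), hCab, hcc n le_rfl, hab1, hab2]

/-- The q-Pfaff–Saalschütz summation. -/
theorem q_pfaff_saalschutz (q a b c : ℂ) (n : ℕ) (hq0 : q ≠ 0)
    (ha : a ≠ 0) (hb : b ≠ 0) (hc0 : c ≠ 0)
    (hroot : ∀ k : ℕ, 1 ≤ k → k ≤ n → q ^ k ≠ 1)
    (hc : ∀ m : ℕ, m < n → c ≠ q ^ (-(m : ℤ)))
    (hd : ∀ m : ℕ, m < n → a * b * q ^ ((1 : ℤ) - n) / c ≠ q ^ (-(m : ℤ))) :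
    ∑ k ∈ Finset.range (n + 1),
        qp a q k * qp b q k * qp (q ^ (-(n : ℤ))) q k /
          (qp q q k * qp c q k * qp (a * b * q ^ ((1 : ℤ) - n) / c) q k) * q ^ k
      = qp (c / a) q n * qp (c / b) q n / (qp c q n * qp (c / (a * b)) q n) := by
  have h1 : (q : ℂ) ^ (-(n : ℤ)) = (q ^ n)⁻¹ := by
    rw [zpow_neg, zpow_natCast]
  have h2 : a * b * q ^ ((1 : ℤ) - n) / c = a * b * q / (c * q ^ n) := by
    rw [sub_eq_add_neg, zpow_add₀ hq0, zpow_one, zpow_neg, zpow_natCast]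
    ring
  rw [h1, h2]
  apply qps_key q a b c n hq0 ha hb hc0 hroot
  · intro m hm h
    apply hc m hm
    rw [zpow_neg, zpow_natCast]
    have hqm : (q : ℂ) ^ m ≠ 0 := pow_ne_zero _ hq0
    field_simp
    linear_combination h
  · intro m hm h
    apply hd m hm
    rw [h2, zpow_neg, zpow_natCast]
    have hqm : (q : ℂ) ^ m ≠ 0 := pow_ne_zero _ hq0
    field_simp
    linear_combination h
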